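/- Let G be a locally compact Hausdorff group with left Haar measure λ_G and modular function δ_G, let H ⊆ G be a closed subgroup with left Haar measure α and modular function δ_H, let λ⁻¹ denote the pushforward of λ_G under inversion, and let X be a topological space with a continuous right G-action. Then for every u ∈ X and every continuous compactly supported function f : X × H × X × G → ℂ, ∫_G ∫_H f(u·γ⁻¹η, η⁻¹, u·γ⁻¹, γ) dα(η) dλ⁻¹(γ) = ∫_G ∫_H f(u·γ⁻¹, η, u·γ⁻¹η, η⁻¹γ) · (δ_G(η)/δ_H(η)) dα(η) dλ⁻¹(γ). (This expresses that the family of right Haar measures on the transformation groupoid X ⋊ G is quasi-invariant for the left multiplication action of X ⋊ H, with adjoining function δ_G/δ_H.) -/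

import Mathlib

open MeasureTheory MulOpposite Measure TopologicalSpace
open scoped ENNReal NNReal Pointwise

namespace QIAux

variable {K : Type*} [Group K] [TopologicalSpace K] [IsTopologicalGroup K]
  [LocallyCompactSpace K] [T2Space K] [MeasurableSpace K] [BorelSpace K]

lemma exists_testfn (μ : Measure K) [μ.IsHaarMeasure] :
    ∃ f₀ : K → ℝ, Continuous f₀ ∧ HasCompactSupport f₀ ∧ (0 ≤ f₀) ∧ 0 < ∫ x, f₀ x ∂μ := by
  obtain ⟨g, g_comp, g_nonneg, g_one⟩ := exists_continuous_nonneg_pos (1 : K)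
  exact ⟨g, g.continuous, g_comp, g_nonneg,
    g.continuous.integral_pos_of_hasCompactSupport_nonneg_nonzero g_comp g_nonneg g_one⟩

section Delta

variable (μ : Measure K) [μ.IsHaarMeasure] (δ : K → ℝ)
variable (hpos : ∀ x, 0 < δ x)
variable (hδ : ∀ f : K → ℝ, Continuous f → HasCompactSupport f → ∀ c : K,
    ∫ x, f (x * c) ∂μ = (δ c)⁻¹ * ∫ x, f x ∂μ)

include hpos hδ

lemma delta_mul (c d : K) : δ (c * d) = δ c * δ d := by
  obtain ⟨f₀, hc, hs, _, hI⟩ := exists_testfn μ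
  have h1 := hδ f₀ hc hs (c * d)
  have h2 := hδ (fun x => f₀ (x * d)) (hc.comp (continuous_mul_right d))
    (hs.comp_homeomorph (Homeomorph.mulRight d)) c
  have h3 := hδ f₀ hc hs d
  rw [h3] at h2
  have e : ∫ x, f₀ (x * (c * d)) ∂μ = ∫ x, f₀ (x * c * d) ∂μ := by
    simp_rw [mul_assoc]
  rw [e, h2] at h1
  have key : (δ (c * d))⁻¹ * ∫ x, f₀ x ∂μ = (δ c * δ d)⁻¹ * ∫ x, f₀ x ∂μ := by
    rw [← h1, mul_inv]; ring
  exact inv_injective (mul_right_cancel₀ hI.ne' key)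

lemma delta_one : δ 1 = 1 := by
  obtain ⟨f₀, hc, hs, _, hI⟩ := exists_testfn μ
  have h1 := hδ f₀ hc hs 1
  simp only [mul_one] at h1
  have : (δ 1)⁻¹ * ∫ x, f₀ x ∂μ = 1 * ∫ x, f₀ x ∂μ := by rw [← h1, one_mul]
  have h2 : (δ 1)⁻¹ = 1 := mul_right_cancel₀ hI.ne' this
  rw [← inv_inv (δ 1), h2, inv_one]

lemma delta_inv (c : K) : δ c⁻¹ = (δ c)⁻¹ := by
  have h1 : δ c⁻¹ * δ c = 1 := by
    rw [← delta_mul μ δ hpos hδ, inv_mul_cancel, delta_one μ δ hpos hδ]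
  exact eq_inv_of_mul_eq_one_left h1

lemma delta_continuous : Continuous δ := by
  obtain ⟨f₀, hc, hs, _, hI⟩ := exists_testfn μ
  have cont : Continuous fun c => ∫ x, f₀ (x * c) ∂μ := by
    have h1 : Continuous fun c => ∫ y, f₀ (y⁻¹ * c) ∂μ.inv :=
      continuous_integral_apply_inv_mul hc hs
    have h2 : ∀ c : K, ∫ y, f₀ (y⁻¹ * c) ∂μ.inv = ∫ x, f₀ (x * c) ∂μ := by
      intro c
      rw [Measure.inv_def, integral_map (φ := Inv.inv) measurable_inv.aemeasurable
        (f := fun y => f₀ (y⁻¹ * c))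
        (Continuous.aestronglyMeasurable (by fun_prop))]
      simp
    simpa only [h2] using h1
  have hpos2 : ∀ c, 0 < ∫ x, f₀ (x * c) ∂μ := by
    intro c
    rw [hδ f₀ hc hs c]
    exact mul_pos (inv_pos.2 (hpos c)) hI
  have hform : δ = fun c => (∫ x, f₀ x ∂μ) / (∫ x, f₀ (x * c) ∂μ) := by
    funext c
    rw [hδ f₀ hc hs c]
    field_simp
  rw [hform]
  exact continuous_const.div cont fun c => (hpos2 c).ne'

lemma integral_inv_mul_delta_of_regular [μ.Regular] :
    ∀ h : K → ℝ, Continuous h → HasCompactSupport h →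
      ∫ x, h x⁻¹ * δ x⁻¹ ∂μ = ∫ x, h x ∂μ := by
  have δcont : Continuous δ := delta_continuous μ δ hpos hδ
  obtain ⟨f₀, f₀c, f₀s, f₀nn, f₀I⟩ := exists_testfn μ
  -- measure-level right translation
  have meas_right : ∀ d : K, Measure.map (· * d) μ = (Real.toNNReal ((δ d)⁻¹)) • μ := by
    intro d
    haveI : IsMulLeftInvariant (Measure.map (· * d) μ) := by
      constructor
      intro g
      rw [Measure.map_map (measurable_const_mul g) (measurable_mul_const d),
        show ((g * ·) ∘ (· * d)) = ((· * d) ∘ (g * ·)) by funext x; simp [Function.comp, mul_assoc],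
        ← Measure.map_map (measurable_mul_const d) (measurable_const_mul g),
        map_mul_left_eq_self μ g]
    haveI : IsFiniteMeasureOnCompacts (Measure.map (· * d) μ) :=
      IsFiniteMeasureOnCompacts.map μ (Homeomorph.mulRight d)
    haveI : (Measure.map (· * d) μ).Regular := Regular.map (Homeomorph.mulRight d)
    have key := isMulLeftInvariant_eq_smul_of_regular (Measure.map (· * d) μ) μ
    have factor : (haarScalarFactor (Measure.map (· * d) μ) μ : ℝ) = (δ d)⁻¹ := by
      rw [haarScalarFactor_eq_integral_div (Measure.map (· * d) μ) μ f₀c f₀s f₀I.ne',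
        integral_map (measurable_mul_const d).aemeasurable f₀c.aestronglyMeasurable,
        hδ f₀ f₀c f₀s d]
      field_simp
    have factor' : haarScalarFactor (Measure.map (· * d) μ) μ = Real.toNNReal ((δ d)⁻¹) :=
      NNReal.coe_injective (by rw [factor, Real.coe_toNNReal _ (inv_nonneg.2 (hpos d).le)])
    rw [key, factor']
  -- lintegral-level right translation
  have lint : ∀ (F : K → ℝ≥0∞), Measurable F → ∀ d : K,
      ∫⁻ x, F (x * d) ∂μ = ENNReal.ofReal ((δ d)⁻¹) * ∫⁻ x, F x ∂μ := by
    intro F hF d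
    rw [← lintegral_map hF (measurable_mul_const d), meas_right d, ENNReal.smul_def,
      lintegral_smul_measure]
    rfl
  -- the candidate right-Haar-with-density measure
  set w : K → ℝ≥0 := fun x => Real.toNNReal (δ x⁻¹) with hw
  have w_meas : Measurable w := (δcont.comp continuous_inv).measurable.real_toNNReal
  have w_coe : ∀ x : K, ((w x : ℝ≥0∞)) = ENNReal.ofReal (δ x⁻¹) := fun x => rfl
  set ρ : Measure K := μ.withDensity (fun x => (w x : ℝ≥0∞)) with hρ
  set ν : Measure K := Measure.map Inv.inv ρ with hν
  have ρ_right : ∀ d : K, Measure.map (· * d) ρ = ρ := by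
    intro d
    ext s hs
    rw [Measure.map_apply (measurable_mul_const d) hs, hρ,
      withDensity_apply _ (hs.preimage (measurable_mul_const d)), withDensity_apply _ hs,
      ← lintegral_indicator (hs.preimage (measurable_mul_const d)),
      ← lintegral_indicator hs]
    have point : ∀ x : K, ((· * d) ⁻¹' s).indicator (fun x => (w x : ℝ≥0∞)) x
        = ENNReal.ofReal (δ d) * (s.indicator (fun y => (w y : ℝ≥0∞)) (x * d)) := by
      intro x
      by_cases hx : x * d ∈ s
      · rw [Set.indicator_of_mem (by exact hx) , Set.indicator_of_mem hx, w_coe, w_coe]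
        have hd : δ x⁻¹ = δ d * δ (x * d)⁻¹ := by
          rw [← delta_mul μ δ hpos hδ]
          congr 1
          group
        rw [hd, ENNReal.ofReal_mul (hpos d).le]
      · rw [Set.indicator_of_notMem (by exact hx), Set.indicator_of_notMem hx, mul_zero]
    calc ∫⁻ x, ((· * d) ⁻¹' s).indicator (fun x => (w x : ℝ≥0∞)) x ∂μ
        = ∫⁻ x, ENNReal.ofReal (δ d) * (s.indicator (fun y => (w y : ℝ≥0∞)) (x * d)) ∂μ := by
          exact lintegral_congr point
      _ = ENNReal.ofReal (δ d) * ∫⁻ x, s.indicator (fun y => (w y : ℝ≥0∞)) (x * d) ∂μ :=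
          lintegral_const_mul _ ((w_meas.coe_nnreal_ennreal.indicator hs).comp
            (measurable_mul_const d))
      _ = ENNReal.ofReal (δ d) * (ENNReal.ofReal ((δ d)⁻¹)
            * ∫⁻ x, s.indicator (fun y => (w y : ℝ≥0∞)) x ∂μ) := by
          rw [lint _ (w_meas.coe_nnreal_ennreal.indicator hs) d]
      _ = ∫⁻ x, s.indicator (fun y => (w y : ℝ≥0∞)) x ∂μ := by
          rw [← mul_assoc, ← ENNReal.ofReal_mul (hpos d).le,
            mul_inv_cancel₀ (hpos d).ne', ENNReal.ofReal_one, one_mul]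
  haveI ν_li : IsMulLeftInvariant ν := by
    constructor
    intro g
    rw [hν, Measure.map_map (measurable_const_mul g) measurable_inv]
    have e : ((g * ·) ∘ Inv.inv) = (Inv.inv ∘ (· * g⁻¹)) := by
      funext x
      simp [mul_comm]
    rw [e, ← Measure.map_map measurable_inv (measurable_mul_const g⁻¹), ρ_right g⁻¹]
  haveI ν_fc : IsFiniteMeasureOnCompacts ν := by
    constructor
    intro C hC
    rw [hν, Measure.map_apply measurable_inv hC.isClosed.measurableSet, Set.inv_preimage,
      hρ, withDensity_apply _ hC.inv.isClosed.measurableSet]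
    obtain ⟨M, hM⟩ := (hC.inv.image (δcont.comp continuous_inv)).bddAbove
    calc ∫⁻ x in C⁻¹, (w x : ℝ≥0∞) ∂μ ≤ ∫⁻ _ in C⁻¹, ENNReal.ofReal M ∂μ := by
          refine setLIntegral_mono measurable_const fun x hx => ?_
          rw [w_coe]
          exact ENNReal.ofReal_le_ofReal (hM ⟨x, hx, rfl⟩)
      _ = ENNReal.ofReal M * μ C⁻¹ := setLIntegral_const _ _
      _ < ∞ := ENNReal.mul_lt_top ENNReal.ofReal_lt_top hC.inv.measure_lt_top
  -- integral formula for ν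
  have Iν : ∀ g : K → ℝ, Continuous g → ∫ x, g x ∂ν = ∫ x, g x⁻¹ * δ x⁻¹ ∂μ := by
    intro g hg
    rw [hν, integral_map measurable_inv.aemeasurable
      (Continuous.aestronglyMeasurable (by fun_prop)), hρ,
      integral_withDensity_eq_integral_smul w_meas]
    refine integral_congr_ae (Filter.Eventually.of_forall fun x => ?_)
    show w x • g x⁻¹ = g x⁻¹ * δ x⁻¹
    rw [NNReal.smul_def, smul_eq_mul, hw]
    simp only
    rw [Real.coe_toNNReal _ (hpos x⁻¹).le, mul_comm]
  set c₀ : ℝ≥0 := haarScalarFactor ν μ with hc₀def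
  have hc₀ : ∀ g : K → ℝ, Continuous g → HasCompactSupport g →
      ∫ x, g x ∂ν = (c₀ : ℝ) * ∫ x, g x ∂μ := by
    intro g hg h'g
    rw [integral_isMulLeftInvariant_eq_smul_of_hasCompactSupport ν μ hg h'g,
      integral_smul_nnreal_measure, NNReal.smul_def, smul_eq_mul]
  -- the two sided relation
  have key : ∀ g : K → ℝ, Continuous g → HasCompactSupport g →
      ∫ x, g x⁻¹ * δ x⁻¹ ∂μ = (c₀ : ℝ) * ∫ x, g x ∂μ := by
    intro g hg h'g
    rw [← Iν g hg, hc₀ g hg h'g]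
  have key2 : ∀ g : K → ℝ, Continuous g → HasCompactSupport g →
      ∫ x, g x ∂μ = (c₀ : ℝ) * ∫ x, g x⁻¹ * δ x⁻¹ ∂μ := by
    intro g hg h'g
    have Tg_cont : Continuous fun x : K => g x⁻¹ * δ x⁻¹ :=
      (hg.comp continuous_inv).mul (δcont.comp continuous_inv)
    have Tg_supp : HasCompactSupport fun x : K => g x⁻¹ * δ x⁻¹ := by
      have h1 : HasCompactSupport fun x : K => g x⁻¹ := h'g.comp_homeomorph (Homeomorph.inv K)
      exact h1.mul_right
    have e1 := key _ Tg_cont Tg_supp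
    have e2 : ∀ x : K, (fun x : K => g x⁻¹ * δ x⁻¹) x⁻¹ * δ x⁻¹ = g x := by
      intro x
      simp only [inv_inv]
      rw [delta_inv μ δ hpos hδ, mul_assoc, mul_inv_cancel₀ (hpos x).ne', mul_one]
    rw [integral_congr_ae (Filter.Eventually.of_forall e2)] at e1
    exact e1
  -- conclude c₀ = 1
  have c₀sq : (c₀ : ℝ) * (c₀ : ℝ) = 1 := by
    have e1 := key2 f₀ f₀c f₀s
    have e2 := key f₀ f₀c f₀s
    rw [e2, ← mul_assoc] at e1
    have := mul_right_cancel₀ f₀I.ne' (e1.symm.trans (one_mul _).symm)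
    linarith [this]
  have c₀one : (c₀ : ℝ) = 1 := by
    have hnn : (0:ℝ) ≤ (c₀ : ℝ) := c₀.coe_nonneg
    nlinarith [c₀sq]
  intro h hh h'h
  rw [key h hh h'h, c₀one, one_mul]

lemma integral_inv_mul_delta :
    ∀ h : K → ℝ, Continuous h → HasCompactSupport h →
      ∫ x, h x⁻¹ * δ x⁻¹ ∂μ = ∫ x, h x ∂μ := by
  set β : Measure K := haarMeasure (Classical.arbitrary (PositiveCompacts K)) with hβ
  set c : ℝ≥0 := haarScalarFactor μ β with hc
  have trans : ∀ g : K → ℝ, Continuous g → HasCompactSupport g →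
      ∫ x, g x ∂μ = (c : ℝ) * ∫ x, g x ∂β := by
    intro g hg h'g
    rw [integral_isMulLeftInvariant_eq_smul_of_hasCompactSupport μ β hg h'g,
      integral_smul_nnreal_measure, NNReal.smul_def, smul_eq_mul]
  have cpos : (0:ℝ) < c := haarScalarFactor_pos_of_isHaarMeasure μ β
  have hδβ : ∀ f : K → ℝ, Continuous f → HasCompactSupport f → ∀ d : K,
      ∫ x, f (x * d) ∂β = (δ d)⁻¹ * ∫ x, f x ∂β := by
    intro f hf h'f d
    have e := hδ f hf h'f d
    rw [trans f hf h'f, trans (fun x => f (x * d)) (hf.comp (continuous_mul_right d))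
      (h'f.comp_homeomorph (Homeomorph.mulRight d))] at e
    exact mul_left_cancel₀ cpos.ne' (e.trans (by ring))
  have δcont : Continuous δ := delta_continuous μ δ hpos hδ
  intro h hh h'h
  have core := integral_inv_mul_delta_of_regular β δ hpos hδβ
  have Th_cont : Continuous fun x : K => h x⁻¹ * δ x⁻¹ :=
    (hh.comp continuous_inv).mul (δcont.comp continuous_inv)
  have Th_supp : HasCompactSupport fun x : K => h x⁻¹ * δ x⁻¹ :=
    (h'h.comp_homeomorph (Homeomorph.inv K)).mul_right
  rw [trans _ Th_cont Th_supp, trans h hh h'h, core h hh h'h]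

lemma integral_inv_eq_integral_mul_inv_delta :
    ∀ h : K → ℂ, Continuous h → HasCompactSupport h →
      ∫ x, h x⁻¹ ∂μ = ∫ x, h x * (((δ x)⁻¹ : ℝ) : ℂ) ∂μ := by
  have δcont : Continuous δ := delta_continuous μ δ hpos hδ
  have δinvc : Continuous fun x : K => (δ x)⁻¹ := δcont.inv₀ fun x => (hpos x).ne'
  have real_inv : ∀ g : K → ℝ, Continuous g → HasCompactSupport g →
      ∫ x, g x⁻¹ ∂μ = ∫ x, g x * (δ x)⁻¹ ∂μ := by
    intro g hg h'g
    have base := integral_inv_mul_delta μ δ hpos hδ (fun x => g x * (δ x)⁻¹)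
      (hg.mul δinvc) h'g.mul_right
    rw [← base]
    refine integral_congr_ae (Filter.Eventually.of_forall fun x => ?_)
    show g x⁻¹ = g x⁻¹ * (δ x⁻¹)⁻¹ * δ x⁻¹
    rw [mul_assoc, inv_mul_cancel₀ (hpos x⁻¹).ne', mul_one]
  intro h hh h'h
  have int1 : Integrable (fun x : K => h x⁻¹) μ :=
    (hh.comp continuous_inv).integrable_of_hasCompactSupport
      (h'h.comp_homeomorph (Homeomorph.inv K))
  have int2 : Integrable (fun x : K => h x * (((δ x)⁻¹ : ℝ) : ℂ)) μ :=
    (hh.mul (Complex.continuous_ofReal.comp δinvc)).integrable_of_hasCompactSupport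
      h'h.mul_right
  have ereal : ∫ x, RCLike.re (h x⁻¹) ∂μ = ∫ x, RCLike.re (h x * (((δ x)⁻¹ : ℝ) : ℂ)) ∂μ := by
    rw [real_inv (fun y => RCLike.re (h y)) (RCLike.continuous_re.comp hh)
      (h'h.comp_left (map_zero _))]
    refine integral_congr_ae (Filter.Eventually.of_forall fun x => ?_)
    show RCLike.re (h x) * (δ x)⁻¹ = RCLike.re (h x * (((δ x)⁻¹ : ℝ) : ℂ))
    simp only [RCLike.re_to_complex, Complex.mul_re, Complex.ofReal_re, Complex.ofReal_im,
      mul_zero, sub_zero]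
  have eimag : ∫ x, RCLike.im (h x⁻¹) ∂μ = ∫ x, RCLike.im (h x * (((δ x)⁻¹ : ℝ) : ℂ)) ∂μ := by
    rw [real_inv (fun y => RCLike.im (h y)) (RCLike.continuous_im.comp hh)
      (h'h.comp_left (map_zero _))]
    refine integral_congr_ae (Filter.Eventually.of_forall fun x => ?_)
    show RCLike.im (h x) * (δ x)⁻¹ = RCLike.im (h x * (((δ x)⁻¹ : ℝ) : ℂ))
    simp only [RCLike.im_to_complex, Complex.mul_im, Complex.ofReal_re, Complex.ofReal_im,
      mul_zero, zero_add]
  rw [← integral_re_add_im int1, ← integral_re_add_im int2, ereal, eimag]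

end Delta

lemma hdelta_real (μ : Measure K) (δ : K → ℝ)
    (hδ : ∀ f : K → ℂ, Continuous f → HasCompactSupport f → ∀ c : K,
      ∫ x, f (x * c) ∂μ = ((δ c : ℂ))⁻¹ * ∫ x, f x ∂μ) :
    ∀ f : K → ℝ, Continuous f → HasCompactSupport f → ∀ c : K,
      ∫ x, f (x * c) ∂μ = (δ c)⁻¹ * ∫ x, f x ∂μ := by
  intro f hf h'f c
  have e := hδ (fun x => (f x : ℂ)) (Complex.continuous_ofReal.comp hf)
    (h'f.comp_left Complex.ofReal_zero) c
  have h1 : ∫ x, ((f (x * c) : ℝ) : ℂ) ∂μ = ((∫ x, f (x * c) ∂μ : ℝ) : ℂ) :=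
    integral_ofReal (𝕜 := ℂ)
  have h2 : ∫ x, ((f x : ℝ) : ℂ) ∂μ = ((∫ x, f x ∂μ : ℝ) : ℂ) := integral_ofReal (𝕜 := ℂ)
  rw [h1, h2] at e
  exact_mod_cast e

end QIAux

open QIAux

/-- for a locally compact Hausdorff group `G` (left Haar measure `λ_G`,
modular function `δ_G`), a closed subgroup `H ≤ G` (left Haar measure `α`, modular
function `δ_H`), and a continuous right `G`-action on a space `X`, the family of right
Haar measures on the transformation groupoid `X ⋊ G` is quasi-invariant for left
multiplication by `X ⋊ H`, with adjoining function `δ_G/δ_H`: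
`∫∫ f(u·γ⁻¹η, η⁻¹, u·γ⁻¹, γ) dα dλ⁻¹ = ∫∫ f(u·γ⁻¹, η, u·γ⁻¹η, η⁻¹γ) δ_G(η)/δ_H(η) dα dλ⁻¹`. -/
theorem transformation_groupoid_quasi_invariance
    {G X : Type*}
    [Group G] [TopologicalSpace G] [IsTopologicalGroup G]
    [LocallyCompactSpace G] [T2Space G] [MeasurableSpace G] [BorelSpace G]
    [TopologicalSpace X]
    [MulAction Gᵐᵒᵖ X] [ContinuousSMul Gᵐᵒᵖ X]
    (lamG : Measure G) [lamG.IsHaarMeasure]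
    (δG : G → ℝ) (hδGpos : ∀ γ, 0 < δG γ)
    (hδG : ∀ f : G → ℂ, Continuous f → HasCompactSupport f → ∀ c : G,
      ∫ γ, f (γ * c) ∂lamG = ((δG c : ℂ))⁻¹ * ∫ γ, f γ ∂lamG)
    (H : Subgroup G) (hH : IsClosed (H : Set G))
    (α : Measure H) [α.IsHaarMeasure]
    (δH : H → ℝ) (hδHpos : ∀ η, 0 < δH η)
    (hδH : ∀ f : H → ℂ, Continuous f → HasCompactSupport f → ∀ c : H,
      ∫ η, f (η * c) ∂α = ((δH c : ℂ))⁻¹ * ∫ η, f η ∂α) :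
    ∀ u : X, ∀ f : X × H × X × G → ℂ, Continuous f → HasCompactSupport f →
      ∫ γ, (∫ η : H, f (op (γ⁻¹ * (η : G)) • u, η⁻¹, op γ⁻¹ • u, γ) ∂α)
          ∂(Measure.map (fun γ : G => γ⁻¹) lamG)
      = ∫ γ, (∫ η : H, f (op γ⁻¹ • u, η, op (γ⁻¹ * (η : G)) • u, (η : G)⁻¹ * γ)
              * ((δG (η : G) / δH η : ℝ) : ℂ) ∂α)
          ∂(Measure.map (fun γ : G => γ⁻¹) lamG) := by
  intro u f hf h'f
  haveI : LocallyCompactSpace H := hH.locallyCompactSpace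
  haveI : BorelSpace H := Subtype.borelSpace (H : Set G)
  have hδGr := hdelta_real lamG δG hδG
  have hδHr := hdelta_real α δH hδH
  have δGcont : Continuous δG := delta_continuous lamG δG hδGpos hδGr
  have δHcont : Continuous δH := delta_continuous α δH hδHpos hδHr
  have δHinvcont : Continuous fun η : H => (δH η)⁻¹ := δHcont.inv₀ fun η => (hδHpos η).ne'
  have invH := integral_inv_eq_integral_mul_inv_delta α δH hδHpos hδHr
  -- compact projections of the support
  have Sfc : IsCompact (tsupport f) := h'f
  set K2 : Set H := (fun p : X × H × X × G => p.2.1) '' tsupport f with hK2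
  have K2c : IsCompact K2 := Sfc.image (by fun_prop)
  set K4 : Set G := (fun p : X × H × X × G => p.2.2.2) '' tsupport f with hK4
  have K4c : IsCompact K4 := Sfc.image (by fun_prop)
  have KGc : IsCompact ((Subtype.val '' K2) * K4) :=
    (K2c.image continuous_subtype_val).mul K4c
  set lamInv : Measure G := Measure.map (fun γ : G => γ⁻¹) lamG with hlamInv
  haveI : IsFiniteMeasureOnCompacts lamInv := by
    rw [show lamInv = lamG.inv from rfl]; infer_instance
  -- the master integrand
  set F : G × H → ℂ := fun p =>
    f (op p.1⁻¹ • u, p.2, op (p.1⁻¹ * (p.2 : G)) • u, ((p.2 : G))⁻¹ * p.1)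
      * (((δH p.2)⁻¹ : ℝ) : ℂ) with hFdef
  have Fcont : Continuous F := by
    apply Continuous.mul
    · apply hf.comp
      refine Continuous.prodMk ?_ (Continuous.prodMk continuous_snd (Continuous.prodMk ?_ ?_))
      · exact (MulOpposite.continuous_op.comp continuous_fst.inv).smul continuous_const
      · exact (MulOpposite.continuous_op.comp
          (continuous_fst.inv.mul (continuous_subtype_val.comp continuous_snd))).smul
          continuous_const
      · exact (continuous_subtype_val.comp continuous_snd).inv.mul continuous_fst
    · exact Complex.continuous_ofReal.comp (δHinvcont.comp continuous_snd)
  -- if F p ≠ 0 then the f-argument is in the support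
  have Fmem : ∀ p : G × H, F p ≠ 0 →
      (op p.1⁻¹ • u, p.2, op (p.1⁻¹ * (p.2 : G)) • u, ((p.2 : G))⁻¹ * p.1) ∈ tsupport f := by
    intro p hp
    exact subset_tsupport f (left_ne_zero_of_mul hp)
  -- STEP 1 : invert the H-variable in the inner integral
  have step1 : ∀ γ : G,
      (∫ η : H, f (op (γ⁻¹ * (η : G)) • u, η⁻¹, op γ⁻¹ • u, γ) ∂α)
        = ∫ η : H, F ((η : G) * γ, η) ∂α := by
    intro γ
    set hγ : H → ℂ := fun κ => f (op (γ⁻¹ * ((κ : G))⁻¹) • u, κ, op γ⁻¹ • u, γ) with hhγ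
    have hγc : Continuous hγ := by
      apply hf.comp
      refine Continuous.prodMk ?_ (Continuous.prodMk continuous_id
        (Continuous.prodMk continuous_const continuous_const))
      exact (MulOpposite.continuous_op.comp (continuous_const.mul
        continuous_subtype_val.inv)).smul continuous_const
    have hγs : HasCompactSupport hγ := by
      apply HasCompactSupport.intro K2c
      intro κ hκ
      by_contra h0
      exact hκ ⟨_, subset_tsupport _ h0, rfl⟩
    have e1 : ∀ η : H, f (op (γ⁻¹ * (η : G)) • u, η⁻¹, op γ⁻¹ • u, γ) = hγ η⁻¹ := by
      intro η
      simp [hhγ]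
    rw [integral_congr_ae (Filter.Eventually.of_forall e1), invH hγ hγc hγs]
    refine integral_congr_ae (Filter.Eventually.of_forall fun η => ?_)
    show hγ η * (((δH η)⁻¹ : ℝ) : ℂ) = F ((η : G) * γ, η)
    rw [hFdef, hhγ]
    simp only
    have a1 : ((η : G) * γ)⁻¹ = γ⁻¹ * ((η : G))⁻¹ := mul_inv_rev _ _
    have a2 : γ⁻¹ * ((η : G))⁻¹ * (η : G) = γ⁻¹ := by group
    have a3 : ((η : G))⁻¹ * ((η : G) * γ) = γ := by group
    rw [a1, a2, a3]
  -- STEP 2 : Fubini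
  have swap1 : ∫ γ, (∫ η : H, F ((η : G) * γ, η) ∂α) ∂lamInv
      = ∫ η : H, (∫ γ, F ((η : G) * γ, η) ∂lamInv) ∂α := by
    apply integral_integral_swap_of_hasCompactSupport
    · show Continuous fun p : G × H => F ((p.2 : G) * p.1, p.2)
      exact Fcont.comp (Continuous.prodMk
        ((continuous_subtype_val.comp continuous_snd).mul continuous_fst) continuous_snd)
    · show HasCompactSupport fun p : G × H => F ((p.2 : G) * p.1, p.2)
      apply HasCompactSupport.intro (K4c.prod K2c)
      rintro ⟨γ, η⟩ hp
      by_contra h0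
      have hmem := Fmem _ h0
      apply hp
      constructor
      · refine ⟨_, hmem, ?_⟩
        show ((η : G))⁻¹ * ((η : G) * γ) = γ
        group
      · exact ⟨_, hmem, rfl⟩
  -- translation of lamInv under left multiplication
  have transl : ∀ g : G → ℂ, Continuous g → HasCompactSupport g → ∀ c : G,
      ∫ γ, g (c * γ) ∂lamInv = ((δG c : ℝ) : ℂ) * ∫ γ, g γ ∂lamInv := by
    intro g hg h'g c
    have m1 : ∫ γ, g (c * γ) ∂lamInv = ∫ γ, g (c * γ⁻¹) ∂lamG := by
      rw [hlamInv]
      exact integral_map measurable_inv.aemeasurable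
        ((hg.comp (continuous_const.mul continuous_id)).aestronglyMeasurable)
    have m2 : ∫ γ, g (c * γ⁻¹) ∂lamG = ∫ γ, (fun y => g y⁻¹) (γ * c⁻¹) ∂lamG := by
      refine integral_congr_ae (Filter.Eventually.of_forall fun γ => ?_)
      show g (c * γ⁻¹) = g ((γ * c⁻¹)⁻¹)
      rw [mul_inv_rev, inv_inv]
    have m3 := hδG (fun y => g y⁻¹) (hg.comp continuous_inv)
      (h'g.comp_homeomorph (Homeomorph.inv G)) c⁻¹
    have m4 : ∫ γ, g γ⁻¹ ∂lamG = ∫ γ, g γ ∂lamInv := by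
      rw [hlamInv, integral_map measurable_inv.aemeasurable hg.aestronglyMeasurable]
    have δval : ((δG c⁻¹ : ℝ) : ℂ)⁻¹ = ((δG c : ℝ) : ℂ) := by
      rw [delta_inv lamG δG hδGpos hδGr c]
      push_cast
      rw [inv_inv]
    rw [m1, m2, m3, δval, ← m4]
  -- STEP 3 : translate the inner integral
  have step3 : ∀ η : H, ∫ γ, F ((η : G) * γ, η) ∂lamInv
      = ((δG (η : G) : ℝ) : ℂ) * ∫ γ, F (γ, η) ∂lamInv := by
    intro η
    have gc : Continuous fun γ : G => F (γ, η) :=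
      Fcont.comp (Continuous.prodMk continuous_id continuous_const)
    have gs : HasCompactSupport fun γ : G => F (γ, η) := by
      apply HasCompactSupport.intro KGc
      intro γ hγ2
      by_contra h0
      have hmem := Fmem _ h0
      apply hγ2
      have : γ = (η : G) * (((η : G))⁻¹ * γ) := by group
      rw [this]
      exact Set.mul_mem_mul ⟨η, ⟨_, hmem, rfl⟩, rfl⟩ ⟨_, hmem, rfl⟩
    exact transl _ gc gs (η : G)
  -- STEP 4 : push the constant into the inner integral
  have step4 : ∫ η : H, ((δG (η : G) : ℝ) : ℂ) * ∫ γ, F (γ, η) ∂lamInv ∂α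
      = ∫ η : H, ∫ γ, ((δG (η : G) : ℝ) : ℂ) * F (γ, η) ∂lamInv ∂α := by
    refine integral_congr_ae (Filter.Eventually.of_forall fun η => ?_)
    exact (integral_const_mul _ _).symm
  -- STEP 5 : Fubini back
  have swap2 : ∫ η : H, (∫ γ, ((δG (η : G) : ℝ) : ℂ) * F (γ, η) ∂lamInv) ∂α
      = ∫ γ, (∫ η : H, ((δG (η : G) : ℝ) : ℂ) * F (γ, η) ∂α) ∂lamInv := by
    apply integral_integral_swap_of_hasCompactSupport
    · show Continuous fun p : H × G => ((δG (p.1 : G) : ℝ) : ℂ) * F (p.2, p.1)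
      exact (Complex.continuous_ofReal.comp
        (δGcont.comp (continuous_subtype_val.comp continuous_fst))).mul
        (Fcont.comp (Continuous.prodMk continuous_snd continuous_fst))
    · show HasCompactSupport fun p : H × G => ((δG (p.1 : G) : ℝ) : ℂ) * F (p.2, p.1)
      apply HasCompactSupport.intro (K2c.prod KGc)
      rintro ⟨η, γ⟩ hp
      by_contra h0
      have h0' : F (γ, η) ≠ 0 := right_ne_zero_of_mul h0
      have hmem := Fmem _ h0'
      apply hp
      constructor
      · exact ⟨_, hmem, rfl⟩
      · have : γ = (η : G) * (((η : G))⁻¹ * γ) := by group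
        rw [this]
        exact Set.mul_mem_mul ⟨η, ⟨_, hmem, rfl⟩, rfl⟩ ⟨_, hmem, rfl⟩
  -- STEP 6 : identify the final integrand
  have step6 : ∀ γ : G, ∀ η : H, ((δG (η : G) : ℝ) : ℂ) * F (γ, η)
      = f (op γ⁻¹ • u, η, op (γ⁻¹ * (η : G)) • u, (η : G)⁻¹ * γ)
          * ((δG (η : G) / δH η : ℝ) : ℂ) := by
    intro γ η
    rw [hFdef]
    simp only
    push_cast
    ring
  calc ∫ γ, (∫ η : H, f (op (γ⁻¹ * (η : G)) • u, η⁻¹, op γ⁻¹ • u, γ) ∂α) ∂lamInv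
      = ∫ γ, (∫ η : H, F ((η : G) * γ, η) ∂α) ∂lamInv :=
        integral_congr_ae (Filter.Eventually.of_forall step1)
    _ = ∫ η : H, (∫ γ, F ((η : G) * γ, η) ∂lamInv) ∂α := swap1
    _ = ∫ η : H, ((δG (η : G) : ℝ) : ℂ) * ∫ γ, F (γ, η) ∂lamInv ∂α :=
        integral_congr_ae (Filter.Eventually.of_forall step3)
    _ = ∫ η : H, ∫ γ, ((δG (η : G) : ℝ) : ℂ) * F (γ, η) ∂lamInv ∂α := step4
    _ = ∫ γ, (∫ η : H, ((δG (η : G) : ℝ) : ℂ) * F (γ, η) ∂α) ∂lamInv := swap2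
    _ = ∫ γ, (∫ η : H, f (op γ⁻¹ • u, η, op (γ⁻¹ * (η : G)) • u, (η : G)⁻¹ * γ)
          * ((δG (η : G) / δH η : ℝ) : ℂ) ∂α) ∂lamInv := by
        refine integral_congr_ae (Filter.Eventually.of_forall fun γ => ?_)
        exact integral_congr_ae (Filter.Eventually.of_forall fun η => step6 γ η)
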